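/- arXiv:1809.07570 — 4 statements merged into one kernel-verified Lean document; each statement's English description precedes it below -/
import Mathlib

section
/- Let C : [0,∞) → (0,∞) be decreasing and suppose there is a decreasing function f : (0,∞) → (0,1) with C(x+y) ≤ C(x)·f(y) for all x ≥ 0, y > 0. Then for any L > 0 and dimension d ≥ 1, the lattice sum ∑_{k ∈ ℕ₀^d \ {0}} C(‖k‖₂ L) is bounded above by C(L) · 2^{d-1} d! / (1 - f(L))^d. -/
set_option maxHeartbeats 1000000

open scoped ENNReal

lemma aux_pow_le_descFactorial : ∀ (e n : ℕ), (n + 1) ^ e ≤ (n + e).descFactorial e := by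
  intro e
  induction e with
  | zero => simp
  | succ e ih =>
    intro n
    have h1 : (n + 1) ^ e ≤ (n + 1 + e).descFactorial e :=
      le_trans (Nat.pow_le_pow_left (by omega) e) (ih (n + 1))
    calc (n + 1) ^ (e + 1) = (n + 1) ^ e * (n + 1) := pow_succ _ _
      _ ≤ (n + 1 + e).descFactorial e * (n + 1) := Nat.mul_le_mul_right _ h1
      _ = (n + (e + 1)).descFactorial (e + 1) := by
          rw [Nat.descFactorial_succ, show n + (e + 1) - e = n + 1 from by omega,
            show n + (e + 1) = n + 1 + e from by omega, Nat.mul_comm]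

/-- Lattice sum bound: under monotonicity, positivity and submultiplicativity of `C`,
`∑_{k ∈ ℕ₀^d \ {0}} C(‖k‖₂ L) ≤ C(L) 2^(d-1) d! / (1 - f(L))^d`. -/
theorem stmt_6 (d : ℕ) (hd : 1 ≤ d) (C f : ℝ → ℝ)
    (hC_pos : ∀ x, 0 ≤ x → 0 < C x)
    (hC_anti : ∀ x y, 0 ≤ x → x ≤ y → C y ≤ C x)
    (hf_pos : ∀ y, 0 < y → 0 < f y)
    (hf_lt : ∀ y, 0 < y → f y < 1)
    (hf_anti : ∀ x y, 0 < x → x ≤ y → f y ≤ f x)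
    (hsub : ∀ x y, 0 ≤ x → 0 < y → C (x + y) ≤ C x * f y)
    (L : ℝ) (hL : 0 < L) :
    ∑' k : {k : Fin d → ℕ // k ≠ 0}, C (Real.sqrt (∑ i, ((k.1 i : ℝ)) ^ 2) * L)
      ≤ C L * 2 ^ (d - 1) * Nat.factorial d / (1 - f L) ^ d := by
  classical
  obtain ⟨e, rfl⟩ := Nat.exists_eq_succ_of_ne_zero (Nat.one_le_iff_ne_zero.mp hd)
  have hr0 : 0 < f L := hf_pos L hL
  have hr1 : f L < 1 := hf_lt L hL
  have hCL : 0 < C L := hC_pos L hL.le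
  have hRHS : 0 ≤ C L * 2 ^ (e + 1 - 1) * (((e+1).factorial : ℕ) : ℝ) / (1 - f L) ^ (e + 1) := by
    have h1r : 0 < 1 - f L := by linarith
    positivity
  -- step lemma
  have hstep : ∀ m : ℕ, 1 ≤ m → C (m * L) ≤ C L * f L ^ (m - 1) := by
    intro m hm
    induction m, hm using Nat.le_induction with
    | base => simp
    | succ n hn ih =>
      have h1 : ((n + 1 : ℕ) : ℝ) * L = (n : ℝ) * L + L := by push_cast; ring
      have h2 : C ((n : ℝ) * L + L) ≤ C ((n : ℝ) * L) * f L :=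
        hsub _ _ (by positivity) hL
      calc C (((n + 1 : ℕ) : ℝ) * L) = C ((n : ℝ) * L + L) := by rw [h1]
        _ ≤ C ((n : ℝ) * L) * f L := h2
        _ ≤ (C L * f L ^ (n - 1)) * f L := mul_le_mul_of_nonneg_right ih hr0.le
        _ = C L * f L ^ (n + 1 - 1) := by
            rw [mul_assoc, ← pow_succ, show n - 1 + 1 = n + 1 - 1 from by omega]
  -- sup norm bounds
  have hsqrt_nonneg : ∀ k : Fin (e+1) → ℕ, 0 ≤ Real.sqrt (∑ i, ((k i : ℝ)) ^ 2) * L :=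
    fun k => mul_nonneg (Real.sqrt_nonneg _) hL.le
  have hM_le_sqrt : ∀ k : Fin (e+1) → ℕ,
      ((Finset.univ.sup k : ℕ) : ℝ) ≤ Real.sqrt (∑ i, ((k i : ℝ)) ^ 2) := by
    intro k
    obtain ⟨j, -, hj⟩ := Finset.exists_mem_eq_sup Finset.univ Finset.univ_nonempty k
    rw [hj]
    have h1 : ((k j : ℝ)) ^ 2 ≤ ∑ i, ((k i : ℝ)) ^ 2 :=
      Finset.single_le_sum (f := fun i => ((k i : ℝ)) ^ 2) (fun i _ => sq_nonneg _)
        (Finset.mem_univ j)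
    calc ((k j : ℕ) : ℝ) = Real.sqrt (((k j : ℝ)) ^ 2) := (Real.sqrt_sq (by positivity)).symm
      _ ≤ _ := Real.sqrt_le_sqrt h1
  have hM_pos : ∀ k : Fin (e+1) → ℕ, k ≠ 0 → 1 ≤ Finset.univ.sup k := by
    intro k hk
    obtain ⟨i, hi⟩ := Function.ne_iff.mp hk
    simp only [Pi.zero_apply] at hi
    exact le_trans (by omega : 1 ≤ k i) (Finset.le_sup (Finset.mem_univ i))
  -- key pointwise bound
  have key : ∀ k : Fin (e+1) → ℕ, k ≠ 0 →
      C (Real.sqrt (∑ i, ((k i : ℝ)) ^ 2) * L) ≤ C L * f L ^ (Finset.univ.sup k - 1) := by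
    intro k hk
    have hm := hM_pos k hk
    have h1 : ((Finset.univ.sup k : ℕ) : ℝ) * L ≤ Real.sqrt (∑ i, ((k i : ℝ)) ^ 2) * L :=
      mul_le_mul_of_nonneg_right (hM_le_sqrt k) hL.le
    calc C (Real.sqrt (∑ i, ((k i : ℝ)) ^ 2) * L)
        ≤ C (((Finset.univ.sup k : ℕ) : ℝ) * L) := hC_anti _ _ (by positivity) h1
      _ ≤ C L * f L ^ (Finset.univ.sup k - 1) := hstep _ hm
  -- fiber emptiness at 0
  have hempty : IsEmpty {k : {k : Fin (e+1) → ℕ // k ≠ 0} // Finset.univ.sup k.1 = 0} := by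
    constructor
    rintro ⟨⟨k, hk⟩, hk0⟩
    have h1 := hM_pos k hk
    have h2 : Finset.univ.sup k = 0 := hk0
    omega
  -- fiber counting
  have hfiber : ∀ m : ℕ,
      (∑' _ : {k : {k : Fin (e+1) → ℕ // k ≠ 0} // Finset.univ.sup k.1 = m},
        ENNReal.ofReal (C L * f L ^ (m - 1)))
      ≤ (((e+1) * (m+1)^e : ℕ) : ℝ≥0∞) * ENNReal.ofReal (C L * f L ^ (m - 1)) := by
    intro m
    have hφex : ∀ x : {k : {k : Fin (e+1) → ℕ // k ≠ 0} // Finset.univ.sup k.1 = m},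
        ∃ j : Fin (e+1), x.1.1 j = m := by
      rintro ⟨⟨k, hk0⟩, hk⟩
      obtain ⟨j, -, hj⟩ := Finset.exists_mem_eq_sup Finset.univ Finset.univ_nonempty k
      exact ⟨j, by show k j = m; rw [← hj]; exact hk⟩
    have hle : ∀ (x : {k : {k : Fin (e+1) → ℕ // k ≠ 0} // Finset.univ.sup k.1 = m})
        (a : Fin (e+1)), x.1.1 a ≤ m := by
      rintro ⟨⟨k, hk0⟩, hk⟩ a
      calc k a ≤ Finset.univ.sup k := Finset.le_sup (Finset.mem_univ a)
        _ = m := hk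
    set φ : {k : {k : Fin (e+1) → ℕ // k ≠ 0} // Finset.univ.sup k.1 = m} →
        Fin (e+1) × (Fin e → Fin (m+1)) :=
      fun x => ((hφex x).choose,
        fun i => ⟨x.1.1 (((hφex x).choose).succAbove i), by
          have := hle x (((hφex x).choose).succAbove i); omega⟩) with hφdef
    have hinj : Function.Injective φ := by
      intro x y hxy
      have hj : (hφex x).choose = (hφex y).choose := congrArg Prod.fst hxy
      have hsnd := congrArg Prod.snd hxy
      have hfun : ∀ a : Fin (e+1), x.1.1 a = y.1.1 a := by
        intro a
        by_cases ha : a = (hφex x).choose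
        · rw [ha, (hφex x).choose_spec]
          rw [hj, (hφex y).choose_spec]
        · obtain ⟨i, hi⟩ := Fin.exists_succAbove_eq ha
          have h3 := congrFun hsnd i
          have hv := congrArg Fin.val h3
          simp only [hφdef] at hv
          rw [← hi]
          rw [hj] at hv ⊢
          exact hv
      apply Subtype.ext
      apply Subtype.ext
      funext a
      exact hfun a
    calc (∑' _ : {k : {k : Fin (e+1) → ℕ // k ≠ 0} // Finset.univ.sup k.1 = m},
          ENNReal.ofReal (C L * f L ^ (m - 1)))
        ≤ ∑' _ : Fin (e+1) × (Fin e → Fin (m+1)), ENNReal.ofReal (C L * f L ^ (m - 1)) :=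
          ENNReal.summable.tsum_le_tsum_of_inj φ hinj (fun _ _ => zero_le) (fun _ => le_rfl)
            ENNReal.summable
      _ = (((e+1) * (m+1)^e : ℕ) : ℝ≥0∞) * ENNReal.ofReal (C L * f L ^ (m - 1)) := by
          rw [tsum_fintype, Finset.sum_const, Finset.card_univ, nsmul_eq_mul]
          congr 1
          push_cast [Fintype.card_prod, Fintype.card_fin, Fintype.card_fun]
          ring
  -- natural number count bound
  have hnat : ∀ n : ℕ, (e+1) * (n+1+1)^e ≤ (e+1) * (2^e * (e.factorial * (n+e).choose e)) := by
    intro n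
    apply Nat.mul_le_mul_left
    calc (n+1+1)^e ≤ (2*(n+1))^e := Nat.pow_le_pow_left (by omega) e
      _ = 2^e * (n+1)^e := Nat.mul_pow 2 (n+1) e
      _ ≤ 2^e * (n+e).descFactorial e :=
          Nat.mul_le_mul_left _ (aux_pow_le_descFactorial e n)
      _ = 2^e * (e.factorial * (n+e).choose e) := by
          rw [Nat.descFactorial_eq_factorial_mul_choose]
  have hK : (0:ℝ) ≤ C L * ((e+1) * 2^e * e.factorial) := by positivity
  have hrnorm : ‖f L‖ < 1 := by rw [Real.norm_eq_abs, abs_of_pos hr0]; exact hr1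
  -- main ENNReal bound
  have main : (∑' k : {k : Fin (e+1) → ℕ // k ≠ 0},
        ENNReal.ofReal (C (Real.sqrt (∑ i, ((k.1 i : ℝ)) ^ 2) * L)))
      ≤ ENNReal.ofReal (C L * 2 ^ e * (((e+1).factorial : ℕ) : ℝ) / (1 - f L) ^ (e + 1)) := by
    calc (∑' k : {k : Fin (e+1) → ℕ // k ≠ 0},
          ENNReal.ofReal (C (Real.sqrt (∑ i, ((k.1 i : ℝ)) ^ 2) * L)))
        ≤ ∑' k : {k : Fin (e+1) → ℕ // k ≠ 0},
            ENNReal.ofReal (C L * f L ^ (Finset.univ.sup k.1 - 1)) :=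
          ENNReal.tsum_le_tsum fun k => ENNReal.ofReal_le_ofReal (key k.1 k.2)
      _ = ∑' (p : Σ m : ℕ, {k : {k : Fin (e+1) → ℕ // k ≠ 0} // Finset.univ.sup k.1 = m}),
            ENNReal.ofReal (C L * f L ^ (p.1 - 1)) := by
          rw [← Equiv.tsum_eq (Equiv.sigmaFiberEquiv
            (fun k : {k : Fin (e+1) → ℕ // k ≠ 0} => Finset.univ.sup k.1))
            (fun k : {k : Fin (e+1) → ℕ // k ≠ 0} =>
              ENNReal.ofReal (C L * f L ^ (Finset.univ.sup k.1 - 1)))]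
          exact tsum_congr fun ⟨m, k, hk⟩ =>
            congrArg (fun t => ENNReal.ofReal (C L * f L ^ (t - 1))) hk
      _ = ∑' (m : ℕ), ∑' (_ : {k : {k : Fin (e+1) → ℕ // k ≠ 0} // Finset.univ.sup k.1 = m}),
            ENNReal.ofReal (C L * f L ^ (m - 1)) := ENNReal.tsum_sigma' _
      _ = ∑' (n : ℕ), ∑' (_ : {k : {k : Fin (e+1) → ℕ // k ≠ 0} // Finset.univ.sup k.1 = n + 1}),
            ENNReal.ofReal (C L * f L ^ (n + 1 - 1)) := by
          haveI := hempty
          rw [tsum_eq_zero_add' ENNReal.summable, tsum_empty, zero_add]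
      _ ≤ ∑' (n : ℕ), ENNReal.ofReal ((C L * ((e+1) * 2^e * e.factorial))
            * (((n+e).choose e : ℝ) * f L ^ n)) := by
          apply ENNReal.tsum_le_tsum
          intro n
          refine le_trans (hfiber (n+1)) ?_
          rw [show n + 1 - 1 = n from rfl]
          rw [← ENNReal.ofReal_natCast, ← ENNReal.ofReal_mul (by positivity)]
          apply ENNReal.ofReal_le_ofReal
          calc (((e+1) * (n+1+1)^e : ℕ) : ℝ) * (C L * f L ^ n)
              ≤ (((e+1) * (2^e * (e.factorial * (n+e).choose e)) : ℕ) : ℝ) * (C L * f L ^ n) := by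
                apply mul_le_mul_of_nonneg_right _ (by positivity)
                exact_mod_cast hnat n
            _ = (C L * ((e+1) * 2^e * e.factorial)) * (((n+e).choose e : ℝ) * f L ^ n) := by
                push_cast; ring
      _ = ENNReal.ofReal (C L * ((e+1) * 2^e * e.factorial))
            * ∑' (n : ℕ), ENNReal.ofReal (((n+e).choose e : ℝ) * f L ^ n) := by
          rw [← ENNReal.tsum_mul_left]
          exact tsum_congr fun n => (ENNReal.ofReal_mul hK)
      _ = ENNReal.ofReal (C L * ((e+1) * 2^e * e.factorial))
            * ENNReal.ofReal (1 / (1 - f L) ^ (e + 1)) := by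
          congr 1
          rw [← ENNReal.ofReal_tsum_of_nonneg (fun n => by positivity)
            (summable_choose_mul_geometric_of_norm_lt_one e hrnorm),
            tsum_choose_mul_geometric_of_norm_lt_one e hrnorm]
      _ = ENNReal.ofReal (C L * 2 ^ e * (((e+1).factorial : ℕ) : ℝ) / (1 - f L) ^ (e + 1)) := by
          rw [← ENNReal.ofReal_mul hK]
          congr 1
          rw [Nat.factorial_succ]
          push_cast
          ring
  -- back to ℝ
  have he1 : e + 1 - 1 = e := by omega
  rw [he1]
  by_cases hsum : Summable (fun k : {k : Fin (e+1) → ℕ // k ≠ 0} =>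
      C (Real.sqrt (∑ i, ((k.1 i : ℝ)) ^ 2) * L))
  · have hnn : ∀ k : {k : Fin (e+1) → ℕ // k ≠ 0},
        0 ≤ C (Real.sqrt (∑ i, ((k.1 i : ℝ)) ^ 2) * L) :=
      fun k => (hC_pos _ (hsqrt_nonneg k.1)).le
    rw [← ENNReal.ofReal_le_ofReal_iff (he1 ▸ hRHS)]
    rw [ENNReal.ofReal_tsum_of_nonneg hnn hsum]
    exact main
  · rw [tsum_eq_zero_of_not_summable hsum]
    exact he1 ▸ hRHS
end

section
/- Let d ≥ 1, z ∈ [0,2L]^d with L > 0, and let C : [0,∞) → (0,∞) be decreasing. Then ∑_{k∈ℕ₀^d} ∑_{ε∈{-1,1}^d} C(‖2Lk + (1−ε)L + ε.z‖₂) ≤ ∑_{k∈ℕ₀^d, k≠0} C(‖k‖₂ L) + C(‖min(z, 2L·1 − z)‖₂), assuming the left-hand series converges, where the minimum is taken componentwise and 1 is the all-ones vector. -/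
open Finset

private lemma summable_sumElim {α β : Type*} {f : α → ℝ} {g : β → ℝ}
    (hf : Summable f) (hg : Summable g) : Summable (Sum.elim f g) := by
  have h1 : Summable (Sum.elim f (fun _ : β => (0:ℝ))) := by
    refine (Sum.inl_injective.summable_iff ?_).mp hf
    rintro (x | x) hx
    · exact absurd ⟨x, rfl⟩ hx
    · rfl
  have h2 : Summable (Sum.elim (fun _ : α => (0:ℝ)) g) := by
    refine (Sum.inr_injective.summable_iff ?_).mp hg
    rintro (x | x) hx
    · rfl
    · exact absurd ⟨x, rfl⟩ hx
  have h3 := h1.add h2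
  convert h3 using 1
  funext x; cases x <;> simp

private def consSplit (s : ℕ) : ((Fin s → ℕ) ⊕ (ℕ × (Fin s → ℕ))) ≃ (Fin (s+1) → ℕ) where
  toFun x := Sum.elim (fun q => Fin.cons 0 q) (fun p => Fin.cons (p.1+1) p.2) x
  invFun m := if h : m 0 = 0 then Sum.inl (Fin.tail m) else Sum.inr (m 0 - 1, Fin.tail m)
  left_inv x := by
    rcases x with q | ⟨r, q⟩
    · simp [Fin.tail_cons]
    · simp [Fin.tail_cons]
  right_inv m := by
    dsimp only
    by_cases h : m 0 = 0
    · rw [dif_pos h]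
      simp only [Sum.elim_inl]
      rw [← h, Fin.cons_self_tail]
    · rw [dif_neg h]
      simp only [Sum.elim_inr]
      have h2 : m 0 - 1 + 1 = m 0 := Nat.succ_pred_eq_of_pos (Nat.pos_of_ne_zero h)
      rw [h2, Fin.cons_self_tail]

private def consSplitP (s t : ℕ) :
    (((Fin s → ℕ) × (Fin t → ℕ)) ⊕ ((ℕ × (Fin s → ℕ)) × (Fin t → ℕ)))
      ≃ ((Fin (s+1) → ℕ) × (Fin t → ℕ)) where
  toFun x := Sum.elim (fun p => (Fin.cons 0 p.1, p.2)) (fun p => (Fin.cons (p.1.1+1) p.1.2, p.2)) x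
  invFun m := if h : m.1 0 = 0 then Sum.inl (Fin.tail m.1, m.2)
    else Sum.inr ((m.1 0 - 1, Fin.tail m.1), m.2)
  left_inv x := by
    rcases x with ⟨q, w⟩ | ⟨⟨r, q⟩, w⟩
    · simp [Fin.tail_cons]
    · simp [Fin.tail_cons]
  right_inv m := by
    dsimp only
    by_cases h : m.1 0 = 0
    · rw [dif_pos h]
      simp only [Sum.elim_inl]
      rw [← h, Fin.cons_self_tail]
    · rw [dif_neg h]
      simp only [Sum.elim_inr]
      have h2 : m.1 0 - 1 + 1 = m.1 0 := Nat.succ_pred_eq_of_pos (Nat.pos_of_ne_zero h)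
      rw [h2, Fin.cons_self_tail]
open Finset

private def FF (h : ℝ → ℝ) (s : ℕ) (a : ℝ) : (Fin s → ℕ) → ℝ :=
  fun q => h ((∑ i, ((q i : ℝ) + 1) ^ 2) + a)

private lemma FF_arg_nonneg {s : ℕ} {a : ℝ} (ha : 0 ≤ a) (q : Fin s → ℕ) :
    0 ≤ (∑ i, ((q i : ℝ) + 1) ^ 2) + a :=
  add_nonneg (Finset.sum_nonneg fun i _ => sq_nonneg _) ha

private lemma FF_mono (h : ℝ → ℝ) (hpos : ∀ x, 0 < h x)
    (hanti : ∀ x y, 0 ≤ x → x ≤ y → h y ≤ h x) {s : ℕ} {a b : ℝ}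
    (ha : 0 ≤ a) (hab : a ≤ b) (H : Summable (FF h s a)) : Summable (FF h s b) :=
  Summable.of_nonneg_of_le (fun q => (hpos _).le)
    (fun q => hanti _ _ (FF_arg_nonneg ha q) (by linarith)) H

private lemma FF_step (h : ℝ → ℝ) {s : ℕ} {a : ℝ}
    (H : Summable (FF h (s+1) a)) : Summable (FF h s (a+1)) := by
  have hinj : Function.Injective (fun q : Fin s → ℕ => (Fin.cons 0 q : Fin (s+1) → ℕ)) := by
    intro q q' hqq
    have := congrArg Fin.tail hqq
    simpa [Fin.tail_cons] using this
  have h2 := H.comp_injective hinj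
  convert h2 using 1
  · exact rfl
  funext q
  simp only [FF, Function.comp]
  congr 1
  rw [Fin.sum_univ_succ]
  simp only [Fin.cons_zero, Fin.cons_succ, Nat.cast_zero]
  ring

private lemma FF_descent (h : ℝ → ℝ) (hpos : ∀ x, 0 < h x)
    (hanti : ∀ x y, 0 ≤ x → x ≤ y → h y ≤ h x) {s : ℕ} {a : ℝ} (ha : 1 ≤ a)
    (H1 : Summable (FF h (s+1) a)) (H0 : Summable (FF h s a)) :
    Summable (FF h (s+1) (a-1)) := by
  rw [← (consSplit s).summable_iff]
  have hED : (FF h (s+1) (a-1)) ∘ (consSplit s) = Sum.elim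
      (fun q : Fin s → ℕ => h ((∑ i, ((q i : ℝ) + 1) ^ 2) + a))
      (fun p : ℕ × (Fin s → ℕ) =>
        h (((p.1 : ℝ) + 2) ^ 2 + ((∑ i, ((p.2 i : ℝ) + 1) ^ 2) + (a - 1)))) := by
    funext x
    rcases x with q | ⟨r, q⟩
    · simp only [Function.comp_apply, consSplit, Equiv.coe_fn_mk, Sum.elim_inl, FF]
      congr 1
      rw [Fin.sum_univ_succ]
      simp only [Fin.cons_zero, Fin.cons_succ, Nat.cast_zero]
      ring
    · simp only [Function.comp_apply, consSplit, Equiv.coe_fn_mk, Sum.elim_inr, FF]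
      congr 1
      rw [Fin.sum_univ_succ]
      simp only [Fin.cons_zero, Fin.cons_succ]
      push_cast
      ring
  rw [hED]
  refine summable_sumElim H0 ?_
  have H2 : Summable (fun p : ℕ × (Fin s → ℕ) =>
      h (((p.1 : ℝ) + 1) ^ 2 + ((∑ i, ((p.2 i : ℝ) + 1) ^ 2) + a))) := by
    have hinj : Function.Injective
        (fun p : ℕ × (Fin s → ℕ) => (Fin.cons p.1 p.2 : Fin (s+1) → ℕ)) := by
      intro p p' hpp
      have h1 := congrArg (fun f => f 0) hpp
      have h2 := congrArg Fin.tail hpp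
      simp only [Fin.cons_zero] at h1
      simp only [Fin.tail_cons] at h2
      exact Prod.ext h1 h2
    have h3 := H1.comp_injective hinj
    convert h3 using 1
    · exact rfl
    funext p
    simp only [FF, Function.comp_apply]
    congr 1
    rw [Fin.sum_univ_succ]
    simp only [Fin.cons_zero, Fin.cons_succ]
    ring
  refine Summable.of_nonneg_of_le (fun p => (hpos _).le) (fun p => ?_) H2
  refine hanti _ _ ?_ ?_
  · have := Finset.sum_nonneg (fun i (_ : i ∈ Finset.univ) => sq_nonneg ((p.2 i : ℝ) + 1))
    nlinarith [sq_nonneg ((p.1 : ℝ) + 1)]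
  · have : (0:ℝ) ≤ (p.1 : ℝ) := Nat.cast_nonneg _
    nlinarith
private lemma FF_chain (h : ℝ → ℝ) (hpos : ∀ x, 0 < h x)
    (hanti : ∀ x y, 0 ≤ x → x ≤ y → h y ≤ h x) {d : ℕ}
    (H : Summable (FF h d 0)) :
    ∀ t, t ≤ d → ∀ a : ℝ, 0 ≤ a → Summable (FF h t a) := by
  have chain : ∀ j, j ≤ d → Summable (FF h (d - j) (j : ℝ)) := by
    intro j
    induction j with
    | zero => intro _; simpa using H
    | succ j ih =>
      intro hj
      have prev := ih (by omega)
      have hs : d - j = (d - (j+1)) + 1 := by omega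
      rw [hs] at prev
      have h2 := FF_step h prev
      have hc : ((j : ℝ) + 1) = ((j + 1 : ℕ) : ℝ) := by push_cast; ring
      rwa [hc] at h2
  intro t
  induction t with
  | zero =>
    intro _ a ha
    haveI : Subsingleton (Fin 0 → ℕ) := ⟨fun f g => funext fun i => i.elim0⟩
    haveI : Finite (Fin 0 → ℕ) := Finite.of_subsingleton
    exact Summable.of_finite
  | succ t iht =>
    intro ht a ha
    have iht' := iht (by omega)
    have base : Summable (FF h (t+1) ((d - (t+1) : ℕ) : ℝ)) := by
      have h2 := chain (d - (t+1)) (by omega)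
      have h3 : d - (d - (t+1)) = t + 1 := by omega
      rwa [h3] at h2
    have desc : ∀ j, j ≤ d - (t+1) →
        Summable (FF h (t+1) ((d - (t+1) - j : ℕ) : ℝ)) := by
      intro j
      induction j with
      | zero => intro _; simpa using base
      | succ j ihj =>
        intro hj
        have prev := ihj (by omega)
        have h1 : (1:ℝ) ≤ ((d - (t+1) - j : ℕ) : ℝ) := by
          have : 1 ≤ d - (t+1) - j := by omega
          exact_mod_cast this
        have hlow := iht' ((d - (t+1) - j : ℕ) : ℝ) (Nat.cast_nonneg _)
        have h2 := FF_descent h hpos hanti h1 prev hlow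
        have hc : ((d - (t+1) - j : ℕ) : ℝ) - 1 = ((d - (t+1) - (j+1) : ℕ) : ℝ) := by
          have e1 : d - (t+1) - j = (d - (t+1) - (j+1)) + 1 := by omega
          rw [e1]; push_cast; ring
        rwa [hc] at h2
    have h0 : Summable (FF h (t+1) 0) := by
      have h2 := desc (d - (t+1)) le_rfl
      have h3 : d - (t+1) - (d - (t+1)) = 0 := by omega
      rw [h3] at h2
      simpa using h2
    exact FF_mono h hpos hanti le_rfl ha h0
private def GG (h : ℝ → ℝ) (s t : ℕ) : (Fin s → ℕ) × (Fin t → ℕ) → ℝ :=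
  fun p => h ((∑ i, ((p.1 i : ℝ)) ^ 2) + ∑ j, ((p.2 j : ℝ) + 1) ^ 2)

private lemma GG_summable (h : ℝ → ℝ) (hpos : ∀ x, 0 < h x)
    (hanti : ∀ x y, 0 ≤ x → x ≤ y → h y ≤ h x) {d : ℕ}
    (H : Summable (FF h d 0)) :
    ∀ s t, s + t ≤ d → Summable (GG h s t) := by
  have hFF := FF_chain h hpos hanti H
  intro s
  induction s with
  | zero =>
    intro t ht
    have h1 : Summable (FF h t 0) := hFF t (by omega) 0 le_rfl
    let e : (Fin t → ℕ) ≃ ((Fin 0 → ℕ) × (Fin t → ℕ)) :=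
      { toFun := fun q => (fun i => i.elim0, q)
        invFun := fun p => p.2
        left_inv := fun q => rfl
        right_inv := fun p => by
          refine Prod.ext ?_ rfl
          exact funext fun i => i.elim0 }
    rw [← e.summable_iff]
    have he : (GG h 0 t) ∘ e = FF h t 0 := by
      funext q
      simp only [GG, FF, Function.comp_apply, e, Equiv.coe_fn_mk]
      congr 1
      rw [Finset.univ_eq_empty, Finset.sum_empty]
      ring
    rw [he]
    exact h1
  | succ s ihs =>
    intro t ht
    rw [← (consSplitP s t).summable_iff]
    have hED : (GG h (s+1) t) ∘ (consSplitP s t) = Sum.elim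
        (fun p : (Fin s → ℕ) × (Fin t → ℕ) => GG h s t p)
        (fun p : (ℕ × (Fin s → ℕ)) × (Fin t → ℕ) =>
          h (((p.1.1 : ℝ) + 1) ^ 2 + ((∑ i, ((p.1.2 i : ℝ)) ^ 2)
            + ∑ j, ((p.2 j : ℝ) + 1) ^ 2))) := by
      funext x
      rcases x with ⟨q, w⟩ | ⟨⟨r, q⟩, w⟩
      · simp only [Function.comp_apply, consSplitP, Equiv.coe_fn_mk, Sum.elim_inl, GG]
        congr 1
        rw [Fin.sum_univ_succ]
        simp only [Fin.cons_zero, Fin.cons_succ, Nat.cast_zero]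
        ring
      · simp only [Function.comp_apply, consSplitP, Equiv.coe_fn_mk, Sum.elim_inr, GG]
        congr 1
        rw [Fin.sum_univ_succ]
        simp only [Fin.cons_zero, Fin.cons_succ]
        push_cast
        ring
    rw [hED]
    refine summable_sumElim (ihs t (by omega)) ?_
    have H2 : Summable (GG h s (t+1)) := ihs (t+1) (by omega)
    have hinj : Function.Injective
        (fun p : (ℕ × (Fin s → ℕ)) × (Fin t → ℕ) =>
          ((p.1.2, Fin.cons p.1.1 p.2) : (Fin s → ℕ) × (Fin (t+1) → ℕ))) := by
      intro p p' hpp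
      have h1 := congrArg Prod.fst hpp
      have h2 := congrArg Prod.snd hpp
      simp only at h1 h2
      have h3 := congrArg (fun f => f 0) h2
      have h4 := congrArg Fin.tail h2
      simp only [Fin.cons_zero] at h3
      simp only [Fin.tail_cons] at h4
      exact Prod.ext (Prod.ext h3 h1) h4
    have h5 := H2.comp_injective hinj
    convert h5 using 1
    · exact rfl
    funext p
    simp only [GG, Function.comp_apply]
    congr 1
    rw [Fin.sum_univ_succ]
    simp only [Fin.cons_zero, Fin.cons_succ]
    ring

private lemma key_summable (h : ℝ → ℝ) (hpos : ∀ x, 0 < h x)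
    (hanti : ∀ x y, 0 ≤ x → x ≤ y → h y ≤ h x) {d : ℕ}
    (H : Summable (FF h d 0)) :
    Summable (fun m : Fin d → ℕ => h (∑ i, ((m i : ℝ)) ^ 2)) := by
  have h1 := GG_summable h hpos hanti H d 0 (by omega)
  have hinj : Function.Injective (fun m : Fin d → ℕ =>
      ((m, fun j => j.elim0) : (Fin d → ℕ) × (Fin 0 → ℕ))) := by
    intro a b hab
    exact congrArg Prod.fst hab
  have h2 := h1.comp_injective hinj
  convert h2 using 1
  · exact rfl
  funext m
  simp only [GG, Function.comp_apply]
  congr 1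
  rw [Fin.sum_univ_zero, add_zero]

set_option maxHeartbeats 1000000 in
/-- Bound on the sum over reflected/translated image points in the Neumann folding:
`∑_{k∈ℕ₀^d} ∑_{ε∈{-1,1}^d} C(‖2Lk + (1-ε)L + ε.z‖₂)
  ≤ ∑_{k∈ℕ₀^d, k≠0} C(‖k‖₂ L) + C(‖min(z, 2L·1 - z)‖₂)`. -/
theorem stmt_11 (d : ℕ) (hd : 1 ≤ d) (L : ℝ) (hL : 0 < L)
    (z : Fin d → ℝ) (hz : ∀ i, z i ∈ Set.Icc 0 (2 * L))
    (C : ℝ → ℝ)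
    (hC_pos : ∀ x, 0 ≤ x → 0 < C x)
    (hC_anti : ∀ x y, 0 ≤ x → x ≤ y → C y ≤ C x)
    (hsum : Summable fun k : Fin d → ℕ => ∑ ε : Fin d → Bool,
      C (Real.sqrt (∑ i, (2 * L * k i + (1 - (if ε i then (1:ℝ) else -1)) * L
          + (if ε i then (1:ℝ) else -1) * z i) ^ 2))) :
    (∑' k : Fin d → ℕ, ∑ ε : Fin d → Bool,
        C (Real.sqrt (∑ i, (2 * L * k i + (1 - (if ε i then (1:ℝ) else -1)) * L
            + (if ε i then (1:ℝ) else -1) * z i) ^ 2)))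
      ≤ (∑' k : {k : Fin d → ℕ // k ≠ 0}, C (Real.sqrt (∑ i, ((k.1 i : ℝ)) ^ 2) * L))
          + C (Real.sqrt (∑ i, (min (z i) (2 * L - z i)) ^ 2)) := by
  classical
  -- abbreviations
  set f : ((Fin d → ℕ) × (Fin d → Bool)) → ℝ := fun p =>
    C (Real.sqrt (∑ i, (2 * L * p.1 i + (1 - (if p.2 i then (1:ℝ) else -1)) * L
        + (if p.2 i then (1:ℝ) else -1) * z i) ^ 2)) with hfdef
  set h : ℝ → ℝ := fun x => C (Real.sqrt x * L) with hhdef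
  have hhpos : ∀ x, 0 < h x := fun x =>
    hC_pos _ (mul_nonneg (Real.sqrt_nonneg x) hL.le)
  have hhanti : ∀ x y, 0 ≤ x → x ≤ y → h y ≤ h x := fun x y hx hxy =>
    hC_anti _ _ (mul_nonneg (Real.sqrt_nonneg x) hL.le)
      (mul_le_mul_of_nonneg_right (Real.sqrt_le_sqrt hxy) hL.le)
  set εs : Fin d → Bool := fun i => decide (z i ≤ L) with hεs
  set nb : ((Fin d → ℕ) × (Fin d → Bool)) → (Fin d → ℕ) := fun p i =>
    2 * p.1 i + (if p.2 i = εs i then 0 else 1) with hnbdef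
  -- the component value
  set w : ((Fin d → ℕ) × (Fin d → Bool)) → Fin d → ℝ := fun p i =>
    2 * L * p.1 i + (1 - (if p.2 i then (1:ℝ) else -1)) * L
        + (if p.2 i then (1:ℝ) else -1) * z i with hwdef
  -- nb is bijective
  have hbij : Function.Bijective nb := by
    constructor
    · intro p p' hpp
      have key : ∀ i, p.1 i = p'.1 i ∧ p.2 i = p'.2 i := by
        intro i
        have hci := congrFun hpp i
        simp only [hnbdef] at hci
        cases hb : p.2 i <;> cases hb' : p'.2 i <;> cases he : εs i <;>
          rw [hb, hb', he] at hci <;> simp at hci <;>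
          exact ⟨by omega, by first | rfl | (exfalso; omega)⟩
      exact Prod.ext (funext fun i => (key i).1) (funext fun i => (key i).2)
    · intro n
      refine ⟨(fun i => n i / 2, fun i => if n i % 2 = 0 then εs i else !(εs i)), ?_⟩
      funext i
      simp only [hnbdef]
      have hne : ¬((!εs i) = εs i) := by cases εs i <;> simp
      by_cases hpar : n i % 2 = 0
      · simp only [if_pos hpar, eq_self_iff_true, if_true]
        omega
      · simp only [if_neg hpar, if_neg hne]
        omega
  set E : ((Fin d → ℕ) × (Fin d → Bool)) ≃ (Fin d → ℕ) := Equiv.ofBijective nb hbij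
    with hEdef
  -- componentwise bounds
  have hcomp : ∀ p (i : Fin d),
      L * (nb p i : ℝ) ≤ w p i ∧ w p i ≤ L * ((nb p i : ℝ) + 1) := by
    intro p i
    have hz1 := (hz i).1
    have hz2 := (hz i).2
    have hk : (0:ℝ) ≤ (p.1 i : ℝ) := Nat.cast_nonneg _
    have hLk : (0:ℝ) ≤ L * (p.1 i : ℝ) := mul_nonneg hL.le hk
    by_cases hzi : z i ≤ L <;> cases hb : p.2 i <;>
      simp only [hwdef, hnbdef, hb, hεs, hzi, decide_true, decide_false, if_true, if_false] <;>
      push_cast <;> constructor <;> nlinarith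
  have hw_nonneg : ∀ p (i : Fin d), 0 ≤ w p i := by
    intro p i
    have h1 := (hcomp p i).1
    have : (0:ℝ) ≤ L * (nb p i : ℝ) := mul_nonneg hL.le (Nat.cast_nonneg _)
    linarith
  -- sums of squares bounds
  have keyLow : ∀ p, L ^ 2 * (∑ i, ((nb p i : ℝ)) ^ 2) ≤ ∑ i, (w p i) ^ 2 := by
    intro p
    rw [Finset.mul_sum]
    refine Finset.sum_le_sum fun i _ => ?_
    have h1 : (L * (nb p i : ℝ)) ^ 2 ≤ (w p i) ^ 2 := by
      refine pow_le_pow_left₀ (mul_nonneg hL.le (Nat.cast_nonneg _)) (hcomp p i).1 2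
    calc L ^ 2 * ((nb p i : ℝ)) ^ 2 = (L * (nb p i : ℝ)) ^ 2 := by ring
    _ ≤ _ := h1
  have keyHigh : ∀ p, (∑ i, (w p i) ^ 2) ≤ L ^ 2 * ∑ i, ((nb p i : ℝ) + 1) ^ 2 := by
    intro p
    rw [Finset.mul_sum]
    refine Finset.sum_le_sum fun i _ => ?_
    have h1 : (w p i) ^ 2 ≤ (L * ((nb p i : ℝ) + 1)) ^ 2 :=
      pow_le_pow_left₀ (hw_nonneg p i) (hcomp p i).2 2
    calc (w p i) ^ 2 ≤ (L * ((nb p i : ℝ) + 1)) ^ 2 := h1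
    _ = L ^ 2 * ((nb p i : ℝ) + 1) ^ 2 := by ring
  -- bounds on f
  have key1 : ∀ p, f p ≤ h (∑ i, ((nb p i : ℝ)) ^ 2) := by
    intro p
    show C _ ≤ C _
    refine hC_anti _ _ (mul_nonneg (Real.sqrt_nonneg _) hL.le) ?_
    have h1 : Real.sqrt (L ^ 2 * ∑ i, ((nb p i : ℝ)) ^ 2) ≤
        Real.sqrt (∑ i, (w p i) ^ 2) := Real.sqrt_le_sqrt (keyLow p)
    rw [Real.sqrt_mul (sq_nonneg L), Real.sqrt_sq hL.le] at h1
    calc Real.sqrt (∑ i, ((nb p i : ℝ)) ^ 2) * L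
        = L * Real.sqrt (∑ i, ((nb p i : ℝ)) ^ 2) := by ring
    _ ≤ Real.sqrt (∑ i, (w p i) ^ 2) := h1
  have key2 : ∀ p, h (∑ i, ((nb p i : ℝ) + 1) ^ 2) ≤ f p := by
    intro p
    show C _ ≤ C _
    refine hC_anti _ _ (Real.sqrt_nonneg _) ?_
    have h1 : Real.sqrt (∑ i, (w p i) ^ 2) ≤
        Real.sqrt (L ^ 2 * ∑ i, ((nb p i : ℝ) + 1) ^ 2) := Real.sqrt_le_sqrt (keyHigh p)
    rw [Real.sqrt_mul (sq_nonneg L), Real.sqrt_sq hL.le] at h1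
    calc Real.sqrt (∑ i, (w p i) ^ 2)
        ≤ L * Real.sqrt (∑ i, ((nb p i : ℝ) + 1) ^ 2) := h1
    _ = Real.sqrt (∑ i, ((nb p i : ℝ) + 1) ^ 2) * L := by ring
  -- exact value at the origin
  have hnb0 : nb ((fun _ => 0 : Fin d → ℕ), εs) = (0 : Fin d → ℕ) := by
    funext i
    simp [hnbdef]
  have hf0 : f ((fun _ => 0 : Fin d → ℕ), εs)
      = C (Real.sqrt (∑ i, (min (z i) (2 * L - z i)) ^ 2)) := by
    simp only [hfdef]
    congr 2
    refine Finset.sum_congr rfl fun i _ => ?_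
    have hz1 := (hz i).1
    have hz2 := (hz i).2
    by_cases hzi : z i ≤ L
    · have hei : εs i = true := by simp [hεs, hzi]
      rw [min_eq_left (by linarith : z i ≤ 2 * L - z i)]
      simp only [hei]
      norm_num
    · have hei : εs i = false := by simp [hεs, hzi]
      rw [min_eq_right (by linarith : 2 * L - z i ≤ z i)]
      simp only [hei]
      norm_num
      ring
  -- summability of f
  have hfnn : ∀ p, 0 ≤ f p := fun p => (hC_pos _ (Real.sqrt_nonneg _)).le
  have hslice : ∀ k : Fin d → ℕ, Summable fun ε : Fin d → Bool => f (k, ε) :=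
    fun k => Summable.of_finite
  have hfsum : Summable f := by
    refine (summable_prod_of_nonneg hfnn).mpr ⟨hslice, ?_⟩
    have he : (fun k : Fin d → ℕ => ∑' ε : Fin d → Bool, f (k, ε))
        = fun k : Fin d → ℕ => ∑ ε : Fin d → Bool, f (k, ε) :=
      funext fun k => tsum_fintype _
    rw [he]
    exact hsum
  have htsummable : Summable (fun n : Fin d → ℕ => f (E.symm n)) :=
    E.symm.summable_iff.mpr hfsum
  have hnbsymm : ∀ n, nb (E.symm n) = n := fun n => E.apply_symm_apply n
  have ht_le : ∀ n : Fin d → ℕ, f (E.symm n) ≤ h (∑ i, ((n i : ℝ)) ^ 2) := by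
    intro n
    have h1 := key1 (E.symm n)
    rwa [hnbsymm n] at h1
  have ht_ge : ∀ n : Fin d → ℕ, h (∑ i, ((n i : ℝ) + 1) ^ 2) ≤ f (E.symm n) := by
    intro n
    have h1 := key2 (E.symm n)
    rwa [hnbsymm n] at h1
  have hEsymm0 : E.symm (0 : Fin d → ℕ) = ((fun _ => 0 : Fin d → ℕ), εs) := by
    rw [Equiv.symm_apply_eq]
    exact hnb0.symm
  have ht0 : f (E.symm (0 : Fin d → ℕ))
      = C (Real.sqrt (∑ i, (min (z i) (2 * L - z i)) ^ 2)) := by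
    rw [hEsymm0, hf0]
  -- base summability and transfer
  have Hbase : Summable (FF h d 0) := by
    refine Summable.of_nonneg_of_le (fun n => (hhpos _).le) (fun n => ?_) htsummable
    have h1 := ht_ge n
    simp only [FF, add_zero]
    exact h1
  have Hall : Summable (fun m : Fin d → ℕ => h (∑ i, ((m i : ℝ)) ^ 2)) :=
    key_summable h hhpos hhanti Hbase
  have hsumite1 : Summable (fun n : Fin d → ℕ => if n = 0 then 0 else f (E.symm n)) := by
    refine Summable.of_nonneg_of_le (fun n => ?_) (fun n => ?_) htsummable
    · by_cases hn : n = 0 <;> simp [hn, hfnn]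
    · by_cases hn : n = 0 <;> simp [hn, hfnn]
  have hsumite2 : Summable (fun n : Fin d → ℕ =>
      if n = 0 then 0 else h (∑ i, ((n i : ℝ)) ^ 2)) := by
    refine Summable.of_nonneg_of_le (fun n => ?_) (fun n => ?_) Hall
    · by_cases hn : n = 0 <;> simp [hn, (hhpos _).le]
    · by_cases hn : n = 0 <;> simp [hn, (hhpos _).le]
  have hsub_eq : (∑' k : {k : Fin d → ℕ // k ≠ 0}, C (Real.sqrt (∑ i, ((k.1 i : ℝ)) ^ 2) * L))
      = ∑' n : Fin d → ℕ, if n = 0 then 0 else h (∑ i, ((n i : ℝ)) ^ 2) := by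
    have h1 := tsum_subtype ({k : Fin d → ℕ | k ≠ 0})
      (fun n : Fin d → ℕ => h (∑ i, ((n i : ℝ)) ^ 2))
    refine h1.trans ?_
    refine tsum_congr fun n => ?_
    by_cases hn : n = 0 <;> simp [Set.indicator_apply, hn]
  have hmain : (∑' k : Fin d → ℕ, ∑ ε : Fin d → Bool, f (k, ε))
      = ∑' n : Fin d → ℕ, f (E.symm n) := by
    have h1 : ∑' p, f p = ∑' k : Fin d → ℕ, ∑ ε : Fin d → Bool, f (k, ε) := by
      rw [Summable.tsum_prod' hfsum hslice]
      exact tsum_congr fun k => tsum_fintype _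
    have h2 : ∑' n : Fin d → ℕ, f (E.symm n) = ∑' p, f p := E.symm.tsum_eq f
    rw [← h1, h2]
  have hgoalL : (∑' k : Fin d → ℕ, ∑ ε : Fin d → Bool,
      C (Real.sqrt (∑ i, (2 * L * k i + (1 - (if ε i then (1:ℝ) else -1)) * L
          + (if ε i then (1:ℝ) else -1) * z i) ^ 2)))
      = ∑' k : Fin d → ℕ, ∑ ε : Fin d → Bool, f (k, ε) := rfl
  have hptwise : ∀ n : Fin d → ℕ, (if n = 0 then 0 else f (E.symm n))
      ≤ (if n = 0 then 0 else h (∑ i, ((n i : ℝ)) ^ 2)) := by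
    intro n
    by_cases hn : n = 0
    · simp [hn]
    · simp only [if_neg hn]
      exact ht_le n
  have hle := Summable.tsum_le_tsum hptwise hsumite1 hsumite2
  rw [hgoalL, hmain, Summable.tsum_eq_add_tsum_ite htsummable (0 : Fin d → ℕ), ht0, hsub_eq]
  linarith
end

section
/- For ν > 0 and x > 0 define the unit Matérn function M_ν(x) = x^ν K_ν(x) / (2^{ν−1} Γ(ν)), where K_ν is the modified Bessel function of the second kind. Then M_ν is strictly decreasing on (0,∞), satisfies 0 < M_ν(x) < 1 for all x > 0, and M_ν(x) → 1 as x → 0⁺. -/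
open MeasureTheory Real Set Filter

/-- The modified Bessel function of the second kind, via its integral representation
`K_ν(x) = ∫_0^∞ e^{-x cosh t} cosh(ν t) dt`. -/
noncomputable def besselK (ν x : ℝ) : ℝ :=
  ∫ t in Set.Ioi (0 : ℝ), Real.exp (-x * Real.cosh t) * Real.cosh (ν * t)

/-- The unit Matérn function `M_ν(x) = x^ν K_ν(x) / (2^(ν-1) Γ(ν))`. -/
noncomputable def maternFn (ν x : ℝ) : ℝ :=
  x ^ ν * besselK ν x / (2 ^ (ν - 1) * Real.Gamma ν)

namespace MaternAux

/-- The Matérn integrand after change of variables. -/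
noncomputable def G (ν x s : ℝ) : ℝ := Real.exp (-s) * s ^ (ν-1) * Real.exp (-x^2/(4*s))

lemma contOn (ν x : ℝ) : ContinuousOn (G ν x) (Set.Ioi 0) := by
  apply ContinuousOn.mul
  · exact ((continuous_exp.comp continuous_neg).continuousOn).mul
      (fun s hs => (Real.continuousAt_rpow_const s (ν-1) (Or.inl (ne_of_gt hs))).continuousWithinAt)
  · apply continuous_exp.comp_continuousOn
    exact continuousOn_const.div ((continuous_const.mul continuous_id).continuousOn)
      (fun s hs => by have : (0:ℝ) < s := hs; positivity)

lemma G_pos (ν : ℝ) {x s : ℝ} (hs : 0 < s) : 0 < G ν x s := by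
  unfold G
  have := Real.rpow_pos_of_pos hs (ν-1)
  positivity

lemma normBound (ν x : ℝ) :
    ∀ᵐ s ∂(volume.restrict (Set.Ioi 0)), ‖G ν x s‖ ≤ Real.exp (-s) * s ^ (ν-1) := by
  filter_upwards [ae_restrict_mem measurableSet_Ioi] with s hs
  have hs0 : (0:ℝ) < s := hs
  have h1 : Real.exp (-x^2/(4*s)) ≤ 1 := by
    rw [Real.exp_le_one_iff, neg_div, neg_nonpos]; positivity
  have h2 : 0 ≤ s ^ (ν-1) := Real.rpow_nonneg hs0.le _
  rw [Real.norm_eq_abs, abs_of_nonneg (le_of_lt (G_pos ν hs0))]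
  calc Real.exp (-s) * s ^ (ν-1) * Real.exp (-x^2/(4*s))
      ≤ Real.exp (-s) * s ^ (ν-1) * 1 := mul_le_mul_of_nonneg_left h1 (by positivity)
    _ = Real.exp (-s) * s ^ (ν-1) := by ring

lemma integrableG (ν : ℝ) (hν : 0 < ν) (x : ℝ) : IntegrableOn (G ν x) (Set.Ioi 0) := by
  apply (Real.GammaIntegral_convergent hν).mono'
  · exact (contOn ν x).aestronglyMeasurable measurableSet_Ioi
  · exact normBound ν x

lemma pointEq (ν x t : ℝ) (hx : 0 < x) :
    |x/2 * Real.exp t| • G ν x (x/2 * Real.exp t)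
      = (x/2)^ν * (Real.exp (-x * Real.cosh t) * Real.exp (ν*t)) := by
  have hc0 : 0 < x/2 := by positivity
  have he : (0:ℝ) < Real.exp t := Real.exp_pos t
  have h4 : -x^2/(4*(x/2*Real.exp t)) = -(x/2 * Real.exp (-t)) := by
    rw [Real.exp_neg]; field_simp; ring
  have h5 : (x/2*Real.exp t)^(ν-1) = (x/2*Real.exp t)^ν / (x/2*Real.exp t) :=
    Real.rpow_sub_one (by positivity) ν
  have h6 : (x/2*Real.exp t)^ν = (x/2)^ν * Real.exp (ν*t) := by
    rw [Real.mul_rpow hc0.le he.le, ← Real.exp_mul, mul_comm t ν]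
  have h7 : Real.exp (-x * Real.cosh t) = Real.exp (-(x/2*Real.exp t)) * Real.exp (-(x/2*Real.exp (-t))) := by
    rw [← Real.exp_add, Real.cosh_eq]; congr 1; ring
  simp only [G, h4, h5, h6, h7, smul_eq_mul, abs_of_pos (by positivity : (0:ℝ) < x/2 * Real.exp t)]
  field_simp

lemma rangeEq (x : ℝ) (hx : 0 < x) : (fun t => x/2 * Real.exp t) '' Set.univ = Set.Ioi 0 := by
  rw [Set.image_univ]
  ext s
  simp only [Set.mem_range, Set.mem_Ioi]
  constructor
  · rintro ⟨t, rfl⟩; positivity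
  · intro hs
    exact ⟨Real.log (s / (x/2)), by
      rw [Real.exp_log (by positivity)]; field_simp⟩

lemma derivF (x : ℝ) : ∀ t ∈ Set.univ, HasDerivWithinAt (fun t => x/2 * Real.exp t) (x/2 * Real.exp t) Set.univ t :=
  fun t _ => ((Real.hasDerivAt_exp t).const_mul (x/2)).hasDerivWithinAt

lemma injF (x : ℝ) (hx : 0 < x) : Set.InjOn (fun t => x/2 * Real.exp t) Set.univ := by
  intro a _ b _ h
  simp only at h
  exact Real.exp_injective (mul_left_cancel₀ (by positivity) h)

lemma changeVar (ν x : ℝ) (hx : 0 < x) :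
    ∫ s in Set.Ioi (0:ℝ), G ν x s
      = (x/2)^ν * ∫ t : ℝ, Real.exp (-x * Real.cosh t) * Real.exp (ν*t) := by
  have key := integral_image_eq_integral_abs_deriv_smul MeasurableSet.univ (derivF x) (injF x hx) (G ν x)
  rw [rangeEq x hx, Measure.restrict_univ] at key
  rw [key, ← integral_const_mul]
  exact integral_congr_ae (Filter.Eventually.of_forall (fun t => pointEq ν x t hx))

lemma integrableH (ν x : ℝ) (hν : 0 < ν) (hx : 0 < x) :
    Integrable (fun t => Real.exp (-x * Real.cosh t) * Real.exp (ν*t)) := by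
  have key := (integrableOn_image_iff_integrableOn_abs_deriv_smul MeasurableSet.univ (derivF x)
      (injF x hx) (G ν x)).mp (by rw [rangeEq x hx]; exact integrableG ν hν x)
  rw [IntegrableOn, Measure.restrict_univ] at key
  have key2 : Integrable (fun t => (x/2)^ν * (Real.exp (-x * Real.cosh t) * Real.exp (ν*t))) :=
    key.congr (Filter.Eventually.of_forall (fun t => pointEq ν x t hx))
  have hc : ((x/2:ℝ)^ν) ≠ 0 := ne_of_gt (Real.rpow_pos_of_pos (by positivity) _)
  have := key2.const_mul ((x/2:ℝ)^ν)⁻¹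
  simpa [← mul_assoc, inv_mul_cancel₀ hc] using this

lemma besselK_repr (ν x : ℝ) (hν : 0 < ν) (hx : 0 < x) :
    besselK ν x = (1/2) * ∫ t : ℝ, Real.exp (-x * Real.cosh t) * Real.exp (ν*t) := by
  have hH := integrableH ν x hν hx
  have hHneg : Integrable (fun t => Real.exp (-x * Real.cosh t) * Real.exp (-(ν*t))) := by
    have := hH.comp_neg
    simpa [Real.cosh_neg, mul_neg] using this
  unfold besselK
  have hsplit : ∀ t:ℝ, Real.exp (-x*Real.cosh t) * Real.cosh (ν*t)
      = (Real.exp (-x*Real.cosh t)*Real.exp (ν*t))/2 + (Real.exp (-x*Real.cosh t)*Real.exp (-(ν*t)))/2 :=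
    fun t => by rw [Real.cosh_eq (ν*t)]; ring
  simp_rw [hsplit]
  rw [integral_add ((hH.div_const 2).integrableOn) ((hHneg.div_const 2).integrableOn),
    integral_div, integral_div]
  have h1 : (∫ t in Set.Ioi (0:ℝ), Real.exp (-x*Real.cosh t)*Real.exp (-(ν*t)))
      = ∫ t in Set.Iic (0:ℝ), Real.exp (-x*Real.cosh t)*Real.exp (ν*t) := by
    rw [show Set.Iic (0:ℝ) = Set.Iic (-(0:ℝ)) by simp, ← integral_comp_neg_Ioi]
    apply integral_congr_ae (Filter.Eventually.of_forall (fun t => ?_))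
    simp [Real.cosh_neg, mul_neg]
  rw [h1]
  have h2 := intervalIntegral.integral_Iic_add_Ioi (hH.integrableOn (s := Set.Iic 0))
    (hH.integrableOn (s := Set.Ioi 0))
  linarith

lemma maternRepr (ν x : ℝ) (hν : 0 < ν) (hx : 0 < x) :
    maternFn ν x = (∫ s in Set.Ioi (0:ℝ), G ν x s) / Real.Gamma ν := by
  rw [changeVar ν x hx]
  unfold maternFn
  rw [besselK_repr ν x hν hx]
  have e1 : (x/2:ℝ)^ν = x^ν / 2^ν := Real.div_rpow hx.le (by norm_num : (0:ℝ) ≤ 2) ν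
  have e2 : (2:ℝ)^(ν-1) = 2^ν/2 := by rw [Real.rpow_sub (by norm_num), Real.rpow_one]
  have h2ν : ((2:ℝ)^ν) ≠ 0 := ne_of_gt (Real.rpow_pos_of_pos (by norm_num) _)
  have hΓ : Real.Gamma ν ≠ 0 := ne_of_gt (Real.Gamma_pos_of_pos hν)
  rw [e1, e2]
  field_simp

lemma integralLt (ν : ℝ) (hν : 0 < ν) {a b : ℝ} (ha : 0 ≤ a) (hab : a < b) :
    (∫ s in Set.Ioi (0:ℝ), G ν b s) < ∫ s in Set.Ioi (0:ℝ), G ν a s := by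
  have hdiff : ∀ s ∈ Set.Ioi (0:ℝ), 0 < G ν a s - G ν b s := by
    intro s hs
    have hs0 : (0:ℝ) < s := hs
    have ha2 : a^2 < b^2 := by nlinarith
    have hexp : Real.exp (-b^2/(4*s)) < Real.exp (-a^2/(4*s)) := by
      apply Real.exp_lt_exp.mpr
      rw [div_lt_div_iff₀ (by positivity) (by positivity)]
      nlinarith
    have hpos : 0 < Real.exp (-s) * s ^ (ν-1) := by
      have := Real.rpow_pos_of_pos hs0 (ν-1); positivity
    unfold G
    nlinarith
  have hpos : 0 < ∫ s in Set.Ioi (0:ℝ), (G ν a s - G ν b s) := by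
    rw [setIntegral_pos_iff_support_of_nonneg_ae]
    · refine lt_of_lt_of_le ?_ (measure_mono (?_ : Set.Ioi (0:ℝ) ⊆ _))
      · simp [Real.volume_Ioi]
      · intro s hs
        exact ⟨ne_of_gt (hdiff s hs), hs⟩
    · filter_upwards [ae_restrict_mem measurableSet_Ioi] with s hs
      exact le_of_lt (hdiff s hs)
    · exact (integrableG ν hν a).sub (integrableG ν hν b)
  rw [integral_sub (integrableG ν hν a) (integrableG ν hν b)] at hpos
  linarith

lemma integralPos (ν : ℝ) (hν : 0 < ν) (x : ℝ) :
    0 < ∫ s in Set.Ioi (0:ℝ), G ν x s := by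
  rw [setIntegral_pos_iff_support_of_nonneg_ae]
  · refine lt_of_lt_of_le ?_ (measure_mono (?_ : Set.Ioi (0:ℝ) ⊆ _))
    · simp [Real.volume_Ioi]
    · intro s hs
      exact ⟨ne_of_gt (G_pos ν hs), hs⟩
  · filter_upwards [ae_restrict_mem measurableSet_Ioi] with s hs
    exact le_of_lt (G_pos ν hs)
  · exact integrableG ν hν x

lemma integralZero (ν : ℝ) (hν : 0 < ν) :
    (∫ s in Set.Ioi (0:ℝ), G ν 0 s) = Real.Gamma ν := by
  rw [Real.Gamma_eq_integral hν]
  apply integral_congr_ae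
  filter_upwards [ae_restrict_mem measurableSet_Ioi] with s hs
  have hs0 : (0:ℝ) < s := hs
  unfold G
  rw [show -(0:ℝ)^2/(4*s) = 0 by simp, Real.exp_zero, mul_one]

lemma integralTendsto (ν : ℝ) (hν : 0 < ν) :
    Tendsto (fun x => ∫ s in Set.Ioi (0:ℝ), G ν x s) (nhdsWithin 0 (Set.Ioi 0))
      (nhds (Real.Gamma ν)) := by
  rw [Real.Gamma_eq_integral hν]
  apply tendsto_integral_filter_of_dominated_convergence (fun s => Real.exp (-s) * s ^ (ν-1))
  · exact Filter.Eventually.of_forall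
      (fun x => (contOn ν x).aestronglyMeasurable measurableSet_Ioi)
  · exact Filter.Eventually.of_forall (fun x => normBound ν x)
  · exact Real.GammaIntegral_convergent hν
  · filter_upwards [ae_restrict_mem measurableSet_Ioi] with s hs
    have hs0 : (0:ℝ) < s := hs
    have hcont : Continuous (fun x : ℝ => G ν x s) := by
      unfold G
      exact continuous_const.mul (Real.continuous_exp.comp
        (((continuous_pow 2).neg).div_const (4*s)))
    have hT : Filter.Tendsto (fun x : ℝ => G ν x s) (nhdsWithin 0 (Set.Ioi 0)) (nhds (G ν 0 s)) :=
      (hcont.tendsto 0).mono_left nhdsWithin_le_nhds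
    simpa [G, show -(0:ℝ)^2/(4*s) = 0 by simp] using hT

end MaternAux

open MaternAux

/-- For `ν > 0`, the unit Matérn function is strictly decreasing on `(0,∞)`, takes values
in `(0,1)`, and tends to `1` as `x → 0⁺`. -/
theorem stmt_12 (ν : ℝ) (hν : 0 < ν) :
    StrictAntiOn (maternFn ν) (Set.Ioi 0) ∧
    (∀ x : ℝ, 0 < x → 0 < maternFn ν x ∧ maternFn ν x < 1) ∧
    Filter.Tendsto (maternFn ν) (nhdsWithin 0 (Set.Ioi 0)) (nhds 1) := by
  have hΓ : 0 < Real.Gamma ν := Real.Gamma_pos_of_pos hν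
  refine ⟨?_, ?_, ?_⟩
  · intro a ha b hb hab
    rw [maternRepr ν a hν ha, maternRepr ν b hν hb]
    exact div_lt_div_of_pos_right (integralLt ν hν (le_of_lt ha) hab) hΓ
  · intro x hx
    rw [maternRepr ν x hν hx]
    constructor
    · exact div_pos (integralPos ν hν x) hΓ
    · rw [div_lt_one hΓ, ← integralZero ν hν]
      exact integralLt ν hν le_rfl hx
  · have h1 : Filter.Tendsto (fun x => (∫ s in Set.Ioi (0:ℝ), G ν x s) / Real.Gamma ν)
        (nhdsWithin 0 (Set.Ioi 0)) (nhds 1) := by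
      have := (integralTendsto ν hν).div_const (Real.Gamma ν)
      rwa [div_self (ne_of_gt hΓ)] at this
    apply Filter.Tendsto.congr' _ h1
    filter_upwards [self_mem_nhdsWithin] with x hx
    exact (maternRepr ν x hν hx).symm
end

section
/- Let C(x) = σ² M_ν(κx) with σ, κ > 0 and suppose the submultiplicative bound C(x+y) ≤ C(x) f(y) holds for all x, y > 0, where f(y) = M_{max(ν,1/2)}(κy) ∈ (0,1) is decreasing. Then for any δ > 0, ℓ > 0 and L = δ + ℓ, one has (2^d −1) C(δ) + 2^d ∑_{k∈ℕ₀^d\{0}} C(‖k‖₂ L) ≤ (2^d −1)(1 + 2^d d! f(ℓ)/(1−f(ℓ))^d) · σ² M_ν(κδ), assuming d ≥ 1. -/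
private lemma aux_pow_succ_sub (e a : ℕ) : (a+1)^(e+1) ≤ a^(e+1) + (e+1)*(a+1)^e := by
  induction e with
  | zero => simp
  | succ e ih =>
    calc (a+1)^(e+2) = (a+1) * (a+1)^(e+1) := by ring
    _ ≤ (a+1) * (a^(e+1) + (e+1)*(a+1)^e) := Nat.mul_le_mul_left _ ih
    _ = a * a^(e+1) + a^(e+1) + (e+1)*((a+1)*(a+1)^e) := by ring
    _ ≤ a * a^(e+1) + (a+1)^(e+1) + (e+1)*((a+1)*(a+1)^e) := by
        have h := Nat.pow_le_pow_left (Nat.le_succ a) (e+1)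
        simp only [Nat.succ_eq_add_one] at h
        omega
    _ = a^(e+2) + (e+2)*(a+1)^(e+1) := by ring

private lemma aux_count (e n : ℕ) :
    (n+2)^(e+1) - (n+1)^(e+1) ≤ (e+1) * 2^e * (Nat.factorial e * (n+e).choose e) := by
  have h1 : (n+2)^(e+1) ≤ (n+1)^(e+1) + (e+1)*(n+2)^e := aux_pow_succ_sub e (n+1)
  have h2 : (n+2)^e ≤ 2^e * (n+1)^e := by
    calc (n+2)^e ≤ (2*(n+1))^e := Nat.pow_le_pow_left (by omega) e
    _ = 2^e * (n+1)^e := Nat.mul_pow 2 (n+1) e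
  have h3 : (n+1)^e ≤ Nat.factorial e * (n+e).choose e := by
    rw [← Nat.ascFactorial_eq_factorial_mul_choose]
    exact Nat.pow_succ_le_ascFactorial (n+1) e
  have h4 : (e+1)*(n+2)^e ≤ (e+1) * 2^e * (Nat.factorial e * (n+e).choose e) := by
    calc (e+1)*(n+2)^e ≤ (e+1)*(2^e * (n+1)^e) := Nat.mul_le_mul_left _ h2
    _ ≤ (e+1)*(2^e * (Nat.factorial e * (n+e).choose e)) :=
        Nat.mul_le_mul_left _ (Nat.mul_le_mul_left _ h3)
    _ = (e+1) * 2^e * (Nat.factorial e * (n+e).choose e) := by ring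
  omega

private lemma aux_series (e N : ℕ) {x : ℝ} (h0 : 0 ≤ x) (h1 : x < 1) :
    ∑ n ∈ Finset.range N, ((n+e).choose e : ℝ) * x^n ≤ 1/(1-x)^(e+1) := by
  have hs := hasSum_choose_mul_geometric_of_norm_lt_one (𝕜 := ℝ) e
    (r := x) (by rwa [Real.norm_eq_abs, abs_of_nonneg h0])
  calc ∑ n ∈ Finset.range N, ((n+e).choose e : ℝ) * x^n
      ≤ ∑' n : ℕ, ((n+e).choose e : ℝ) * x^n :=
        Summable.sum_le_tsum (Finset.range N) (fun n _ => by positivity) hs.summable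
    _ = 1/(1-x)^(e+1) := hs.tsum_eq

/-- Main covariance error bound: with `C(x) = σ² M_ν(κx)`, `f(y) = M_{max(ν,1/2)}(κy)`
decreasing with values in `(0,1)` and satisfying `C(x+y) ≤ C(x) f(y)`, for any
`δ, ℓ > 0` and `L = δ + ℓ`:
`(2^d-1) C(δ) + 2^d ∑_{k∈ℕ₀^d\{0}} C(‖k‖₂ L)
  ≤ (2^d-1)(1 + 2^d d! f(ℓ)/(1-f(ℓ))^d) σ² M_ν(κδ)`. -/
theorem stmt_15 (d : ℕ) (hd : 1 ≤ d) (ν σ κ : ℝ) (hν : 0 < ν) (hσ : 0 < σ) (hκ : 0 < κ)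
    (C f : ℝ → ℝ)
    (hC : ∀ x, C x = σ ^ 2 * maternFn ν (κ * x))
    (hf : ∀ y, f y = maternFn (max ν (1/2)) (κ * y))
    (hC_pos : ∀ x, 0 < x → 0 < C x)
    (hC_anti : ∀ x y, 0 < x → x ≤ y → C y ≤ C x)
    (hf_mem : ∀ y, 0 < y → f y ∈ Set.Ioo (0 : ℝ) 1)
    (hf_anti : ∀ x y, 0 < x → x ≤ y → f y ≤ f x)
    (hsub : ∀ x y, 0 < x → 0 < y → C (x + y) ≤ C x * f y)
    (δ ℓ L : ℝ) (hδ : 0 < δ) (hℓ : 0 < ℓ) (hLdef : L = δ + ℓ) :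
    ((2 : ℝ) ^ d - 1) * C δ
        + 2 ^ d * ∑' k : {k : Fin d → ℕ // k ≠ 0},
            C (Real.sqrt (∑ i, ((k.1 i : ℝ)) ^ 2) * L)
      ≤ ((2 : ℝ) ^ d - 1) * (1 + 2 ^ d * Nat.factorial d * f ℓ / (1 - f ℓ) ^ d)
          * (σ ^ 2 * maternFn ν (κ * δ)) := by
  classical
  obtain ⟨e, rfl⟩ : ∃ e, d = e + 1 := ⟨d - 1, by omega⟩
  set x : ℝ := f ℓ with hxdef
  obtain ⟨hx0, hx1⟩ := hf_mem ℓ hℓ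
  have hL : 0 < L := by rw [hLdef]; linarith
  have hℓL : ℓ ≤ L := by rw [hLdef]; linarith
  have hCδ : 0 < C δ := hC_pos δ hδ
  have h1x : 0 < 1 - x := by linarith
  -- C(mL) ≤ C δ * x^m for m ≥ 1
  have key : ∀ m : ℕ, C (((m:ℝ)+1) * L) ≤ C δ * x ^ (m+1) := by
    intro m
    induction m with
    | zero => simpa [hLdef] using hsub δ ℓ hδ hℓ
    | succ m ih =>
      have hpos : 0 < ((m:ℝ)+1) * L := by positivity
      have h1 : C ((((m:ℕ):ℝ)+1) * L + L) ≤ C (((m:ℝ)+1) * L) * f L := hsub _ _ hpos hL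
      have h2 : C (((m:ℝ)+1) * L) * f L ≤ (C δ * x ^ (m+1)) * x := by
        apply mul_le_mul ih (hf_anti ℓ L hℓ hℓL) (hf_mem L hL).1.le (by positivity)
      have heq : (((m:ℕ):ℝ)+1) * L + L = (((m+1:ℕ):ℝ)+1) * L := by push_cast; ring
      calc C ((((m+1:ℕ):ℝ)+1) * L) = C ((((m:ℕ):ℝ)+1) * L + L) := by rw [heq]
      _ ≤ (C δ * x ^ (m+1)) * x := h1.trans h2
      _ = C δ * x ^ (m+1+1) := by ring
  -- per-k bound
  have hterm : ∀ k : {k : Fin (e+1) → ℕ // k ≠ 0},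
      C (Real.sqrt (∑ i, ((k.1 i : ℝ))^2) * L) ≤ C δ * x ^ (Finset.univ.sup k.1) := by
    intro k
    have hm1 : 1 ≤ Finset.univ.sup k.1 := by
      obtain ⟨i, hi⟩ : ∃ i, k.1 i ≠ 0 := by
        by_contra h; push_neg at h; exact k.2 (funext fun i => h i)
      exact le_trans (by omega) (Finset.le_sup (Finset.mem_univ i))
    obtain ⟨m, hm⟩ : ∃ m, Finset.univ.sup k.1 = m + 1 := ⟨Finset.univ.sup k.1 - 1, by omega⟩
    obtain ⟨i0, -, hi0⟩ := Finset.exists_mem_eq_sup Finset.univ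
      (Finset.univ_nonempty) k.1
    have hsq : ((Finset.univ.sup k.1 : ℕ) : ℝ) ≤ Real.sqrt (∑ i, ((k.1 i : ℝ))^2) := by
      rw [hi0]
      have hle : ((k.1 i0 : ℝ))^2 ≤ ∑ i, ((k.1 i : ℝ))^2 :=
        Finset.single_le_sum (f := fun i => ((k.1 i : ℝ))^2) (fun i _ => by positivity) (Finset.mem_univ i0)
      calc ((k.1 i0 : ℝ)) = Real.sqrt (((k.1 i0 : ℝ))^2) := (Real.sqrt_sq (by positivity)).symm
      _ ≤ _ := Real.sqrt_le_sqrt hle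
    have hmpos : 0 < ((Finset.univ.sup k.1 : ℕ) : ℝ) * L := by
      have : (1:ℝ) ≤ ((Finset.univ.sup k.1 : ℕ) : ℝ) := by exact_mod_cast hm1
      positivity
    have h1 : C (Real.sqrt (∑ i, ((k.1 i : ℝ))^2) * L)
        ≤ C (((Finset.univ.sup k.1 : ℕ) : ℝ) * L) :=
      hC_anti _ _ hmpos (mul_le_mul_of_nonneg_right hsq hL.le)
    refine h1.trans ?_
    rw [hm]
    have := key m
    push_cast
    push_cast at this
    linarith
  -- bound on the lattice sum
  set Bc : ℝ := 2^e * ((e+1).factorial : ℝ) * x / (1-x)^(e+1) * C δ with hBc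
  have hBcnn : 0 ≤ Bc := by positivity
  have hB : (∑' k : {k : Fin (e+1) → ℕ // k ≠ 0},
      C (Real.sqrt (∑ i, ((k.1 i : ℝ)) ^ 2) * L)) ≤ Bc := by
    apply tsum_le_of_sum_le' hBcnn
    intro s
    set M : {k : Fin (e+1) → ℕ // k ≠ 0} → ℕ := fun k => Finset.univ.sup k.1 with hM
    have hM1 : ∀ k : {k : Fin (e+1) → ℕ // k ≠ 0}, 1 ≤ M k := by
      intro k
      obtain ⟨i, hi⟩ : ∃ i, k.1 i ≠ 0 := by
        by_contra h; push_neg at h; exact k.2 (funext fun i => h i)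
      exact le_trans (by omega) (Finset.le_sup (Finset.mem_univ i))
    set N := s.sup M with hN
    have step1 : ∑ k ∈ s, C (Real.sqrt (∑ i, ((k.1 i : ℝ)) ^ 2) * L)
        ≤ ∑ k ∈ s, C δ * x ^ (M k) := Finset.sum_le_sum (fun k _ => hterm k)
    have step2 : ∑ k ∈ s, C δ * x ^ (M k)
        = ∑ m ∈ Finset.range (N+1), ∑ k ∈ s.filter (fun k => M k = m), C δ * x ^ (M k) :=
      (Finset.sum_fiberwise_of_maps_to
        (fun k hk => Finset.mem_range.2 (Nat.lt_succ_of_le (Finset.le_sup hk))) _).symm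
    have step3 : ∀ m, ∑ k ∈ s.filter (fun k => M k = m), C δ * x ^ (M k)
        = ((s.filter (fun k => M k = m)).card : ℝ) * (C δ * x^m) := by
      intro m
      rw [Finset.sum_congr rfl (fun k hk => by rw [(Finset.mem_filter.1 hk).2])]
      rw [Finset.sum_const, nsmul_eq_mul]
    -- card bound
    have hcard : ∀ m : ℕ, (s.filter (fun k => M k = m)).card ≤ (m+1)^(e+1) - m^(e+1) := by
      intro m
      have hinj : Set.InjOn (fun k : {k : Fin (e+1) → ℕ // k ≠ 0} => k.1)
          ↑(s.filter (fun k => M k = m)) := fun a _ b _ h => Subtype.ext h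
      rw [← Finset.card_image_of_injOn hinj]
      set B := Fintype.piFinset (fun _ : Fin (e+1) => Finset.range (m+1)) with hBdef
      set A := Fintype.piFinset (fun _ : Fin (e+1) => Finset.range m) with hAdef
      have hAB : A ⊆ B := Fintype.piFinset_subset _ _
        (fun _ => Finset.range_subset_range.2 (Nat.le_succ m))
      have hsub' : (s.filter (fun k => M k = m)).image (fun k => k.1) ⊆ B \ A := by
        intro g hg
        obtain ⟨k, hk, rfl⟩ := Finset.mem_image.1 hg
        obtain ⟨hks, hkm⟩ := Finset.mem_filter.1 hk
        rw [Finset.mem_sdiff]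
        constructor
        · rw [hBdef, Fintype.mem_piFinset]
          intro i
          exact Finset.mem_range.2 (Nat.lt_succ_of_le (hkm ▸ Finset.le_sup (Finset.mem_univ i)))
        · intro hA
          rw [hAdef, Fintype.mem_piFinset] at hA
          have h0 : k.1 ⟨0, by omega⟩ < m := Finset.mem_range.1 (hA _)
          have hmpos : 0 < m := by omega
          have : M k < m := by
            rw [hM]
            exact (Finset.sup_lt_iff (show ⊥ < m from hmpos)).2
              (fun i _ => Finset.mem_range.1 (hA i))
          omega
      calc ((s.filter (fun k => M k = m)).image (fun k => k.1)).card
          ≤ (B \ A).card := Finset.card_le_card hsub'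
        _ = B.card - A.card := Finset.card_sdiff_of_subset hAB
        _ = (m+1)^(e+1) - m^(e+1) := by
            rw [hBdef, hAdef, Fintype.card_piFinset, Fintype.card_piFinset]
            simp [Finset.card_range, Finset.prod_const]
    have hcard0 : (s.filter (fun k => M k = 0)).card = 0 := by
      rw [Finset.card_eq_zero, Finset.filter_eq_empty_iff]
      intro k _
      have := hM1 k
      omega
    -- put together
    have step4 : ∑ m ∈ Finset.range (N+1), ((s.filter (fun k => M k = m)).card : ℝ) * (C δ * x^m)
        ≤ (((e+1) * 2^e * Nat.factorial e : ℕ) : ℝ) * C δ * x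
            * ∑ n ∈ Finset.range N, ((n+e).choose e : ℝ) * x^n := by
      rw [Finset.sum_range_succ']
      rw [hcard0]
      push_cast [Nat.cast_zero]
      rw [Finset.mul_sum]
      simp only [zero_mul, add_zero]
      apply Finset.sum_le_sum
      intro n _
      have hc := (hcard (n+1)).trans (aux_count e n)
      have hcR : (((s.filter (fun k => M k = n+1)).card : ℕ) : ℝ)
          ≤ (((e+1) * 2^e * (Nat.factorial e * (n+e).choose e) : ℕ) : ℝ) := by
        exact_mod_cast hc
      push_cast at hcR
      have hxp : (0:ℝ) ≤ C δ * x^(n+1) := by positivity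
      calc (((s.filter (fun k => M k = n+1)).card : ℕ) : ℝ) * (C δ * x^(n+1))
          ≤ ((e+1) * 2^e * ((Nat.factorial e : ℝ) * ((n+e).choose e : ℝ))) * (C δ * x^(n+1)) :=
            mul_le_mul_of_nonneg_right hcR hxp
        _ = ((e:ℝ)+1) * 2^e * (Nat.factorial e : ℝ) * C δ * x * (((n+e).choose e : ℝ) * x^n) := by
            ring
    have step5 : (((e+1) * 2^e * Nat.factorial e : ℕ) : ℝ) * C δ * x
            * ∑ n ∈ Finset.range N, ((n+e).choose e : ℝ) * x^n ≤ Bc := by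
      have hser := aux_series e N hx0.le hx1
      have hcoef : (0:ℝ) ≤ (((e+1) * 2^e * Nat.factorial e : ℕ) : ℝ) * C δ * x := by positivity
      calc (((e+1) * 2^e * Nat.factorial e : ℕ) : ℝ) * C δ * x
            * ∑ n ∈ Finset.range N, ((n+e).choose e : ℝ) * x^n
          ≤ (((e+1) * 2^e * Nat.factorial e : ℕ) : ℝ) * C δ * x * (1/(1-x)^(e+1)) :=
            mul_le_mul_of_nonneg_left hser hcoef
        _ = Bc := by
            rw [hBc]
            have hfact : (((e+1).factorial : ℕ) : ℝ) = ((e:ℝ)+1) * (Nat.factorial e : ℝ) := by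
              rw [Nat.factorial_succ]; push_cast; ring
            push_cast [hfact]
            field_simp
    calc ∑ k ∈ s, C (Real.sqrt (∑ i, ((k.1 i : ℝ)) ^ 2) * L)
        ≤ ∑ k ∈ s, C δ * x ^ (M k) := step1
      _ = ∑ m ∈ Finset.range (N+1), ∑ k ∈ s.filter (fun k => M k = m), C δ * x ^ (M k) := step2
      _ = ∑ m ∈ Finset.range (N+1), ((s.filter (fun k => M k = m)).card : ℝ) * (C δ * x^m) :=
          Finset.sum_congr rfl (fun m _ => step3 m)
      _ ≤ _ := step4
      _ ≤ Bc := step5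
  -- final algebra
  rw [← hC δ]
  have h2e : (2:ℝ)^e ≤ 2^(e+1) - 1 := by
    have h1 : (1:ℝ) ≤ 2^e := one_le_pow₀ (by norm_num)
    rw [pow_succ]; linarith
  set K : ℝ := ((e+1).factorial : ℝ) * x / (1-x)^(e+1) with hK
  have hKnn : 0 ≤ K := by positivity
  have hBcK : Bc = 2^e * K * C δ := by rw [hBc, hK]; ring
  have hgoal : (2:ℝ)^(e+1) * Bc ≤ ((2:ℝ)^(e+1) - 1) * (2^(e+1) * K) * C δ := by
    rw [hBcK]
    have h2 : (2:ℝ)^(e+1) * (2^e * K * C δ) = 2^e * (2^(e+1) * K * C δ) := by ring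
    rw [h2]
    have h3 : (0:ℝ) ≤ 2^(e+1) * K * C δ := by positivity
    calc (2:ℝ)^e * (2^(e+1) * K * C δ) ≤ ((2:ℝ)^(e+1) - 1) * (2^(e+1) * K * C δ) :=
          mul_le_mul_of_nonneg_right h2e h3
      _ = ((2:ℝ)^(e+1) - 1) * (2^(e+1) * K) * C δ := by ring
  have hrhs : ((2:ℝ)^(e+1) - 1) * (1 + 2^(e+1) * ((e+1).factorial : ℝ) * x / (1-x)^(e+1)) * C δ
      = ((2:ℝ)^(e+1) - 1) * C δ + ((2:ℝ)^(e+1) - 1) * (2^(e+1) * K) * C δ := by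
    rw [hK]; ring
  have htsum : (2:ℝ)^(e+1) * (∑' k : {k : Fin (e+1) → ℕ // k ≠ 0},
      C (Real.sqrt (∑ i, ((k.1 i : ℝ)) ^ 2) * L)) ≤ (2:ℝ)^(e+1) * Bc :=
    mul_le_mul_of_nonneg_left hB (by positivity)
  calc ((2 : ℝ) ^ (e+1) - 1) * C δ
        + 2 ^ (e+1) * ∑' k : {k : Fin (e+1) → ℕ // k ≠ 0},
            C (Real.sqrt (∑ i, ((k.1 i : ℝ)) ^ 2) * L)
      ≤ ((2 : ℝ) ^ (e+1) - 1) * C δ + 2^(e+1) * Bc := by linarith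
    _ ≤ ((2 : ℝ) ^ (e+1) - 1) * C δ + ((2:ℝ)^(e+1) - 1) * (2^(e+1) * K) * C δ := by linarith
    _ = ((2 : ℝ) ^ (e+1) - 1) * (1 + 2^(e+1) * ((e+1).factorial : ℝ) * x / (1-x)^(e+1)) * C δ :=
        hrhs.symm
end
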